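/- Let ({θ_i}_{i=0}^d; {θ*_i}_{i=0}^d; {φ_i}_{i=1}^d; {ϕ_i}_{i=1}^d) be a parameter array of diameter d ≥ 1 over a field K. The following are equivalent: (i) there exist scalars ξ, ζ, ξ*, ζ* in K with ξ, ξ* nonzero such that θ_{d−i} = ξθ_i + ζ and θ*_{d−i} = ξ*θ*_i + ζ* for 0 ≤ i ≤ d, and φ_{d−i+1} = ξξ*φ_i and ϕ_{d−i+1} = ξξ*ϕ_i for 1 ≤ i ≤ d (i.e., the relative P^↓⇓ is affine isomorphic to P); (ii) φ_1 = φ_d and ϕ_1 = ϕ_d; (iii) φ_i = φ_{d−i+1} and ϕ_i = ϕ_{d−i+1} for 1 ≤ i ≤ d; (iv) each of (θ*_i − θ*_0)(θ_i − θ_0)^{−1} and (θ*_{d−i} − θ*_d)(θ_i − θ_0)^{−1} is independent of i for 1 ≤ i ≤ d. Moreover, if (i)–(iv) hold, then each of θ_i + θ_{d−i} and θ*_i + θ*_{d−i} is independent of i for 0 ≤ i ≤ d, and (i) is satisfied with ξ = −1, ξ* = −1, ζ equal to the common value of θ_i + θ_{d−i}, and ζ* equal to the common value of θ*_i + θ*_{d−i}.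 -/

import Mathlib

namespace DownDownAux
variable {K : Type*} [Field K]

/-- Chebyshev-like sequence: p 0 = -1, p 1 = 0, p (n+2) = β p(n+1) - p n. -/
def pseq (β : K) : ℕ → K
  | 0 => -1
  | 1 => 0
  | n + 2 => β * pseq β (n + 1) - pseq β n

@[simp] lemma pseq_zero (β : K) : pseq β 0 = -1 := rfl
@[simp] lemma pseq_one (β : K) : pseq β 1 = 0 := rfl
lemma pseq_add_two (β : K) (n : ℕ) : pseq β (n + 2) = β * pseq β (n + 1) - pseq β n := rfl
@[simp] lemma pseq_two (β : K) : pseq β 2 = 1 := by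
  show pseq β (0 + 2) = 1
  rw [pseq_add_two]; simp

/-- partial sums q n = p 1 + ... + p n -/
def qseq (β : K) : ℕ → K
  | 0 => 0
  | n + 1 => qseq β n + pseq β (n + 1)

@[simp] lemma qseq_zero (β : K) : qseq β 0 = 0 := rfl
lemma qseq_succ (β : K) (n : ℕ) : qseq β (n + 1) = qseq β n + pseq β (n + 1) := rfl
@[simp] lemma qseq_one (β : K) : qseq β 1 = 0 := by rw [qseq_succ]; simp

lemma wron' (β : K) (n : ℕ) :
    pseq β (n + 1) ^ 2 - β * pseq β n * pseq β (n + 1) + pseq β n ^ 2 = 1 := by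
  induction n with
  | zero => simp
  | succ n ih =>
    rw [pseq_add_two]
    linear_combination ih

lemma wron (β : K) (n : ℕ) :
    pseq β (n + 1) ^ 2 - pseq β n * pseq β (n + 2) = 1 := by
  rw [pseq_add_two]
  linear_combination wron' β n

lemma pseq_addf (β : K) (k m : ℕ) :
    pseq β (k + m) = pseq β (k + 1) * pseq β (m + 1) - pseq β k * pseq β m := by
  induction k using Nat.twoStepInduction generalizing m with
  | zero => simp
  | one => simp [show 1 + m = m + 1 by omega, pseq_add_two]
  | more k ih1 ih2 =>
    have e1 : k + 2 + m = k + m + 2 := by omega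
    have e3 : k + m + 1 = k + 1 + m := by omega
    rw [e1, pseq_add_two β (k + m), e3, ih2, ih1,
        show k + 2 + 1 = k + 1 + 2 from rfl, pseq_add_two β (k + 1), pseq_add_two β k]
    simp only [show (1 + 1 : ℕ) = 2 from rfl, pseq_two, pseq_one]
    linear_combination (-1 : K) * ih1 m

lemma Akm (β : K) (k m : ℕ) :
    pseq β (k + m + 1) * (pseq β m - pseq β k)
      = (pseq β (k + m) + 1) * (pseq β (m + 1) - pseq β (k + 1)) := by
  have h1 := pseq_addf β k m
  have h2 := pseq_addf β k (m + 1)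
  rw [show k + (m + 1) = k + m + 1 from rfl] at h2
  rw [h1, h2, pseq_add_two]
  linear_combination (pseq β (m+1)) * wron' β k - (pseq β (k+1)) * wron' β m

lemma qdiff (β : K) (n : ℕ) :
    (β - 2) * qseq β n = pseq β (n + 1) - pseq β n - 1 := by
  induction n with
  | zero => simp
  | succ n ih =>
    rw [qseq_succ, pseq_add_two]
    linear_combination ih

lemma pseq_beta_two (n : ℕ) : pseq (2 : K) n = (n : K) - 1 := by
  induction n using Nat.twoStepInduction with
  | zero => simp
  | one => simp
  | more n ih1 ih2 =>
    rw [pseq_add_two, ih1, ih2]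
    push_cast
    ring

lemma qseq_beta_two (n : ℕ) : 2 * qseq (2 : K) n = (n : K) * ((n : K) - 1) := by
  induction n with
  | zero => simp
  | succ n ih =>
    rw [qseq_succ, pseq_beta_two]
    push_cast
    linear_combination ih

end DownDownAux

namespace DownDownAux
variable {K : Type*} [Field K]

lemma core_lemma (d : ℕ) (hd3 : 3 ≤ d) (θ θs : ℕ → K)
    (hθ : ∀ i j, i ≤ d → j ≤ d → i ≠ j → θ i ≠ θ j)
    (hθs : ∀ i j, i ≤ d → j ≤ d → i ≠ j → θs i ≠ θs j)
    (hPA5 : ∀ i j, 2 ≤ i → i ≤ d - 1 → 2 ≤ j → j ≤ d - 1 →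
      (θ (i - 2) - θ (i + 1)) / (θ (i - 1) - θ i)
        = (θs (i - 2) - θs (i + 1)) / (θs (i - 1) - θs i) ∧
      (θ (i - 2) - θ (i + 1)) / (θ (i - 1) - θ i)
        = (θ (j - 2) - θ (j + 1)) / (θ (j - 1) - θ j))
    (hE2 : (θs 1 - θs 0) * (θ d - θ 0) = (θs d - θs 0) * (θ 1 - θ 0))
    (hD1d : θ 1 - θ 0 = θ d - θ (d - 1)) :
    (∀ i ≤ d, θ i + θ (d - i) = θ 0 + θ d) ∧
    (∀ i ≤ d, (θs i - θs 0) * (θ d - θ 0) = (θs d - θs 0) * (θ i - θ 0)) := by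
  obtain ⟨e, rfl⟩ : ∃ e, d = e + 3 := ⟨d - 3, by omega⟩
  rw [show e + 3 - 1 = e + 2 from by omega] at hD1d
  have hne : ∀ i j, i ≤ e + 3 → j ≤ e + 3 → i ≠ j → θ i - θ j ≠ 0 :=
    fun i j hi hj hij => sub_ne_zero_of_ne (hθ i j hi hj hij)
  have hnes : ∀ i j, i ≤ e + 3 → j ≤ e + 3 → i ≠ j → θs i - θs j ≠ 0 :=
    fun i j hi hj hij => sub_ne_zero_of_ne (hθs i j hi hj hij)
  set B : K := (θ 0 - θ 3) / (θ 1 - θ 2) with hBdef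
  set β : K := B - 1 with hβdef
  -- the three-term recurrences from (PA5)
  have hrecB : ∀ j, j + 3 ≤ e + 3 →
      θ j - θ (j + 3) = B * (θ (j + 1) - θ (j + 2)) ∧
      θs j - θs (j + 3) = B * (θs (j + 1) - θs (j + 2)) := by
    intro j hj
    have h5 := hPA5 (j + 2) 2 (by omega) (by omega) (by omega) (by omega)
    simp only [show j + 2 - 2 = j from by omega, show j + 2 - 1 = j + 1 from by omega,
      show j + 2 + 1 = j + 3 from by omega, show 2 - 2 = 0 from by omega,
      show 2 - 1 = 1 from by omega, show 2 + 1 = 3 from by omega] at h5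
    have hden : θ (j + 1) - θ (j + 2) ≠ 0 := hne _ _ (by omega) (by omega) (by omega)
    have hdens : θs (j + 1) - θs (j + 2) ≠ 0 := hnes _ _ (by omega) (by omega) (by omega)
    constructor
    · rw [hBdef]
      exact (div_eq_iff hden).mp h5.2
    · rw [hBdef]
      refine (div_eq_iff hdens).mp ?_
      rw [← h5.1]
      exact h5.2
  have hrec : ∀ j, j + 3 ≤ e + 3 →
      θ (j + 3) - θ (j + 2) = β * (θ (j + 2) - θ (j + 1)) - (θ (j + 1) - θ j) := by
    intro j hj
    have h := (hrecB j hj).1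
    rw [hβdef]
    linear_combination (-1 : K) * h
  have hrecs : ∀ j, j + 3 ≤ e + 3 →
      θs (j + 3) - θs (j + 2) = β * (θs (j + 2) - θs (j + 1)) - (θs (j + 1) - θs j) := by
    intro j hj
    have h := (hrecB j hj).2
    rw [hβdef]
    linear_combination (-1 : K) * h
  -- representation of differences via pseq
  have hrep : ∀ j, j + 1 ≤ e + 3 → θ (j + 1) - θ j
      = pseq β (j + 1) * (θ 2 - θ 1) - pseq β j * (θ 1 - θ 0) := by
    intro j
    induction j using Nat.twoStepInduction with
    | zero => intro _; simp only [Nat.zero_add, pseq_one, pseq_zero]; ring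
    | one => intro _; simp only [show (1:ℕ) + 1 = 2 from rfl, pseq_two, pseq_one]; ring
    | more j ih1 ih2 =>
      rw [show j + 1 + 1 = j + 2 from by omega] at ih2
      intro h
      have r := hrec j (by omega)
      have hps : pseq β (j + 3) = β * pseq β (j + 2) - pseq β (j + 1) := pseq_add_two β (j + 1)
      have hps0 : pseq β (j + 2) = β * pseq β (j + 1) - pseq β j := pseq_add_two β j
      rw [show j + 2 + 1 = j + 3 from by omega]
      linear_combination r + β * ih2 (by omega) - ih1 (by omega)
        - (θ 2 - θ 1) * hps + (θ 1 - θ 0) * hps0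
  have hreps : ∀ j, j + 1 ≤ e + 3 → θs (j + 1) - θs j
      = pseq β (j + 1) * (θs 2 - θs 1) - pseq β j * (θs 1 - θs 0) := by
    intro j
    induction j using Nat.twoStepInduction with
    | zero => intro _; simp only [Nat.zero_add, pseq_one, pseq_zero]; ring
    | one => intro _; simp only [show (1:ℕ) + 1 = 2 from rfl, pseq_two, pseq_one]; ring
    | more j ih1 ih2 =>
      rw [show j + 1 + 1 = j + 2 from by omega] at ih2
      intro h
      have r := hrecs j (by omega)
      have hps : pseq β (j + 3) = β * pseq β (j + 2) - pseq β (j + 1) := pseq_add_two β (j + 1)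
      have hps0 : pseq β (j + 2) = β * pseq β (j + 1) - pseq β j := pseq_add_two β j
      rw [show j + 2 + 1 = j + 3 from by omega]
      linear_combination r + β * ih2 (by omega) - ih1 (by omega)
        - (θs 2 - θs 1) * hps + (θs 1 - θs 0) * hps0
  -- the boundary relation Δ_1 = Δ_d in pseq form
  have h1 : pseq β (e + 3) * (θ 2 - θ 1) = (pseq β (e + 2) + 1) * (θ 1 - θ 0) := by
    have r := hrep (e + 2) (by omega)
    rw [show e + 2 + 1 = e + 3 from by omega] at r
    linear_combination (-1 : K) * r - hD1d
  -- partial sums formula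
  have hxf : ∀ j, j + 1 ≤ e + 3 → θ (j + 1) - θ 0
      = qseq β (j + 1) * (θ 2 - θ 1) - qseq β j * (θ 1 - θ 0) + (θ 1 - θ 0) := by
    intro j
    induction j with
    | zero => intro _; simp only [Nat.zero_add, qseq_one, qseq_zero]; ring
    | succ j ih =>
      intro h
      have r := hrep (j + 1) (by omega)
      have hq2 : qseq β (j + 2) = qseq β (j + 1) + pseq β (j + 2) := qseq_succ β (j + 1)
      have hq1 : qseq β (j + 1) = qseq β j + pseq β (j + 1) := qseq_succ β j
      rw [show j + 1 + 1 = j + 2 from by omega] at r ⊢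
      linear_combination ih (by omega) + r - (θ 2 - θ 1) * hq2 + (θ 1 - θ 0) * hq1
  -- the "Wronskian" partial sums
  have hyf : ∀ j, j ≤ e + 3 →
      (θ 1 - θ 0) * (θs j - θs 0) - (θs 1 - θs 0) * (θ j - θ 0)
      = qseq β j * ((θ 1 - θ 0) * (θs 2 - θs 1) - (θs 1 - θs 0) * (θ 2 - θ 1)) := by
    intro j
    induction j with
    | zero => intro _; simp only [qseq_zero]; ring
    | succ j ih =>
      intro h
      have r := hrep j (by omega)
      have rs := hreps j (by omega)
      have hq1 : qseq β (j + 1) = qseq β j + pseq β (j + 1) := qseq_succ β j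
      linear_combination ih (by omega) + (θ 1 - θ 0) * rs - (θs 1 - θs 0) * r
        - ((θ 1 - θ 0) * (θs 2 - θs 1) - (θs 1 - θs 0) * (θ 2 - θ 1)) * hq1
  -- q_d ≠ 0
  have NQD : qseq β (e + 3) ≠ 0 := by
    intro h0
    have hq2 : qseq β (e + 2) = -pseq β (e + 3) := by
      have hq : qseq β (e + 3) = qseq β (e + 2) + pseq β (e + 3) := qseq_succ β (e + 2)
      rw [h0] at hq
      linear_combination (-1 : K) * hq
    have hxd : θ (e + 3) - θ 0 = (1 + pseq β (e + 3)) * (θ 1 - θ 0) := by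
      have hx := hxf (e + 2) (by omega)
      rw [show e + 2 + 1 = e + 3 from by omega] at hx
      linear_combination hx + (θ 2 - θ 1) * h0 - (θ 1 - θ 0) * hq2
    have hp1 : pseq β (e + 3) + 1 ≠ 0 := by
      intro hp
      have hz : θ (e + 3) - θ 0 = 0 := by
        rw [hxd]
        linear_combination (θ 1 - θ 0) * hp
      exact hne (e + 3) 0 (by omega) (by omega) (by omega) hz
    have hq3 : pseq β (e + 4) = pseq β (e + 3) + 1 := by
      have hqd := qdiff β (e + 3)
      rw [show e + 3 + 1 = e + 4 from by omega, h0] at hqd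
      linear_combination (-1 : K) * hqd
    have hfac : (pseq β (e + 3) + 1) * (pseq β (e + 2) - pseq β (e + 3) + 1) = 0 := by
      have hw := wron β (e + 2)
      rw [show e + 2 + 1 = e + 3 from by omega, show e + 2 + 2 = e + 4 from by omega] at hw
      linear_combination (-1 : K) * hw - pseq β (e + 2) * hq3
    have hp2 : pseq β (e + 2) = pseq β (e + 3) - 1 := by
      rcases mul_eq_zero.mp hfac with h | h
      · exact absurd h hp1
      · linear_combination h
    by_cases hp3 : pseq β (e + 3) = 0
    · have hq1' : qseq β (e + 2) = 0 := by rw [hq2, hp3, neg_zero]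
      have hq0 : qseq β (e + 1) = 1 := by
        have hq : qseq β (e + 2) = qseq β (e + 1) + pseq β (e + 2) := qseq_succ β (e + 1)
        rw [hq1', hp2, hp3] at hq
        linear_combination (-1 : K) * hq
      have hx := hxf (e + 1) (by omega)
      rw [show e + 1 + 1 = e + 2 from by omega, hq1', hq0] at hx
      have hz : θ (e + 2) - θ 0 = 0 := by linear_combination hx
      exact hne (e + 2) 0 (by omega) (by omega) (by omega) hz
    · have hD2 : θ 2 - θ 1 = θ 1 - θ 0 := by
        have hkey : pseq β (e + 3) * (θ 2 - θ 1) = pseq β (e + 3) * (θ 1 - θ 0) := by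
          linear_combination h1 + (θ 1 - θ 0) * hp2
        exact mul_left_cancel₀ hp3 hkey
      have hβ2 : β = 2 := by
        have hrec4 : pseq β (e + 4) = β * pseq β (e + 3) - pseq β (e + 2) := pseq_add_two β (e + 2)
        have hz : (β - 2) * pseq β (e + 3) = 0 := by
          linear_combination (-1 : K) * hrec4 + hq3 + hp2
        rcases mul_eq_zero.mp hz with h | h
        · linear_combination h
        · exact absurd h hp3
      have hpn : ∀ n, pseq β n = (n : K) - 1 := fun n => by rw [hβ2]; exact pseq_beta_two n
      have hxj : ∀ j, j ≤ e + 3 → θ j - θ 0 = (j : K) * (θ 1 - θ 0) := by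
        intro j
        induction j with
        | zero => intro _; simp
        | succ j ih =>
          intro h
          have r := hrep j (by omega)
          rw [hpn (j + 1), hpn j, hD2] at r
          push_cast at r ⊢
          linear_combination ih (by omega) + r
      have h2q : 2 * qseq β (e + 3) = ((e + 3 : ℕ) : K) * (((e + 3 : ℕ) : K) - 1) := by
        rw [hβ2]; exact qseq_beta_two _
      rw [h0, mul_zero] at h2q
      have hd0 : ((e + 3 : ℕ) : K) ≠ 0 := by
        intro hcast
        have hx := hxj (e + 3) (by omega)
        rw [hcast, zero_mul] at hx
        exact hne (e + 3) 0 (by omega) (by omega) (by omega) hx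
      have hd1 : ((e + 3 : ℕ) : K) - 1 ≠ 0 := by
        intro hcast
        have hx := hxj (e + 2) (by omega)
        have hz : ((e + 2 : ℕ) : K) = 0 := by push_cast at hcast ⊢; linear_combination hcast
        rw [hz, zero_mul] at hx
        exact hne (e + 2) 0 (by omega) (by omega) (by omega) hx
      rcases mul_eq_zero.mp h2q.symm with h | h
      · exact hd0 h
      · exact hd1 h
  -- symmetry of the differences
  have hΔsym : ∀ k m, k + m + 1 = e + 3 → θ (m + 1) - θ m = θ (k + 1) - θ k := by
    intro k m hkm
    have rm := hrep m (by omega)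
    have rk := hrep k (by omega)
    by_cases hp3 : pseq β (e + 3) = 0
    · have h10 : θ 1 - θ 0 ≠ 0 := hne 1 0 (by omega) (by omega) (by omega)
      have h1' := h1
      rw [hp3, zero_mul] at h1'
      have hp2 : pseq β (e + 2) = -1 := by
        rcases mul_eq_zero.mp h1'.symm with h | h
        · linear_combination h
        · exact absurd h h10
      have hq3' : pseq β (e + 4) = 1 := by
        have hrec4 : pseq β (e + 4) = β * pseq β (e + 3) - pseq β (e + 2) := pseq_add_two β (e + 2)
        rw [hp3, hp2] at hrec4
        linear_combination hrec4
      have hβ2 : β = 2 := by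
        have hqd := qdiff β (e + 3)
        rw [show e + 3 + 1 = e + 4 from by omega, hq3', hp3] at hqd
        have hz : (β - 2) * qseq β (e + 3) = 0 := by linear_combination hqd
        rcases mul_eq_zero.mp hz with h | h
        · linear_combination h
        · exact absurd h NQD
      have hpn : ∀ n, pseq β n = (n : K) - 1 := fun n => by rw [hβ2]; exact pseq_beta_two n
      have hd2 : (e : K) + 2 = 0 := by
        have hz := hpn (e + 3)
        rw [hp3] at hz
        push_cast at hz
        linear_combination (-1 : K) * hz
      have h2K : (2 : K) = 0 := by
        have h2q : 2 * qseq β (e + 3) = ((e + 3 : ℕ) : K) * (((e + 3 : ℕ) : K) - 1) := by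
          rw [hβ2]; exact qseq_beta_two _
        have hz : ((e + 3 : ℕ) : K) * (((e + 3 : ℕ) : K) - 1) = 0 := by
          push_cast
          linear_combination ((e : K) + 3) * hd2
        rw [hz] at h2q
        rcases mul_eq_zero.mp h2q with h | h
        · exact h
        · exact absurd h NQD
      have hkmc := congrArg (fun n : ℕ => (n : K)) hkm
      push_cast at hkmc
      have hdiff : (m : K) - (k : K) = 0 := by
        linear_combination hkmc + hd2 - (k : K) * h2K
      rw [hpn (m + 1), hpn m] at rm
      rw [hpn (k + 1), hpn k] at rk
      push_cast at rm rk
      linear_combination rm - rk + ((θ 2 - θ 1) - (θ 1 - θ 0)) * hdiff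
    · have hA := Akm β k m
      rw [show k + m = e + 2 from by omega, show e + 2 + 1 = e + 3 from by omega] at hA
      have key : pseq β (e + 3) * ((θ (m + 1) - θ m) - (θ (k + 1) - θ k)) = 0 := by
        linear_combination pseq β (e + 3) * rm - pseq β (e + 3) * rk
          - (θ 1 - θ 0) * hA + (pseq β (m + 1) - pseq β (k + 1)) * h1
      rcases mul_eq_zero.mp key with h | h
      · exact absurd h hp3
      · linear_combination h
  -- C1
  have hC1 : ∀ i ≤ e + 3, θ i + θ (e + 3 - i) = θ 0 + θ (e + 3) := by
    intro i
    induction i with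
    | zero => intro _; rw [Nat.sub_zero]
    | succ i ih =>
      intro h
      have hih := ih (by omega)
      have hsym := hΔsym i (e + 2 - i) (by omega)
      rw [show e + 2 - i + 1 = e + 3 - i from by omega] at hsym
      rw [show e + 3 - (i + 1) = e + 2 - i from by omega]
      linear_combination hih - hsym
  -- C2
  have hqW : qseq β (e + 3) *
      ((θ 1 - θ 0) * (θs 2 - θs 1) - (θs 1 - θs 0) * (θ 2 - θ 1)) = 0 := by
    have hyd := hyf (e + 3) (by omega)
    linear_combination (-1 : K) * hyd + (-1 : K) * hE2
  have hW0 : (θ 1 - θ 0) * (θs 2 - θs 1) - (θs 1 - θs 0) * (θ 2 - θ 1) = 0 := by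
    rcases mul_eq_zero.mp hqW with h | h
    · exact absurd h NQD
    · exact h
  have hC2 : ∀ i ≤ e + 3,
      (θs i - θs 0) * (θ (e + 3) - θ 0) = (θs (e + 3) - θs 0) * (θ i - θ 0) := by
    intro i hi
    have hyi := hyf i hi
    have hyd := hyf (e + 3) (by omega)
    rw [hW0, mul_zero] at hyi hyd
    have h10 : θ 1 - θ 0 ≠ 0 := hne 1 0 (by omega) (by omega) (by omega)
    apply mul_left_cancel₀ h10
    linear_combination (θ (e + 3) - θ 0) * hyi - (θ i - θ 0) * hyd
  exact ⟨hC1, hC2⟩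

end DownDownAux

open DownDownAux



/-- A parameter array of diameter `d` over a field `K`:
conditions (PA1)–(PA5) of Terwilliger's classification of Leonard systems. -/
def IsParamArray (K : Type*) [Field K] (d : ℕ) (θ θs φ ϕ : ℕ → K) : Prop :=
  -- (PA1)
  (∀ i, 1 ≤ i → i ≤ d → φ i ≠ 0 ∧ ϕ i ≠ 0) ∧
  -- (PA2)
  (∀ i j, i ≤ d → j ≤ d → i ≠ j → θ i ≠ θ j ∧ θs i ≠ θs j) ∧
  -- (PA3)
  (∀ i, 1 ≤ i → i ≤ d →
    φ i = ϕ 1 * (∑ h ∈ Finset.range i, (θ h - θ (d - h)) / (θ 0 - θ d))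
      + (θs i - θs 0) * (θ (i - 1) - θ d)) ∧
  -- (PA4)
  (∀ i, 1 ≤ i → i ≤ d →
    ϕ i = φ 1 * (∑ h ∈ Finset.range i, (θ h - θ (d - h)) / (θ 0 - θ d))
      + (θs i - θs 0) * (θ (d - i + 1) - θ 0)) ∧
  -- (PA5)
  (∀ i j, 2 ≤ i → i ≤ d - 1 → 2 ≤ j → j ≤ d - 1 →
    (θ (i - 2) - θ (i + 1)) / (θ (i - 1) - θ i)
      = (θs (i - 2) - θs (i + 1)) / (θs (i - 1) - θs i) ∧
    (θ (i - 2) - θ (i + 1)) / (θ (i - 1) - θ i)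
      = (θ (j - 2) - θ (j + 1)) / (θ (j - 1) - θ j))

/-- Characterization of when the relative `P^↓⇓` is affine isomorphic to `P`. -/
theorem downDown_affine_iso {K : Type*} [Field K] (d : ℕ) (hd : 1 ≤ d)
    (θ θs φ ϕ : ℕ → K) (hPA : IsParamArray K d θ θs φ ϕ) :
    -- (i) ↔ (ii)
    ((∃ ξ ζ ξs ζs : K, ξ ≠ 0 ∧ ξs ≠ 0 ∧
        (∀ i ≤ d, θ (d - i) = ξ * θ i + ζ ∧ θs (d - i) = ξs * θs i + ζs) ∧
        (∀ i, 1 ≤ i → i ≤ d →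
          φ (d - i + 1) = ξ * ξs * φ i ∧ ϕ (d - i + 1) = ξ * ξs * ϕ i))
      ↔ (φ 1 = φ d ∧ ϕ 1 = ϕ d)) ∧
    -- (ii) ↔ (iii)
    ((φ 1 = φ d ∧ ϕ 1 = ϕ d) ↔
      (∀ i, 1 ≤ i → i ≤ d → φ i = φ (d - i + 1) ∧ ϕ i = ϕ (d - i + 1))) ∧
    -- (ii) ↔ (iv)
    ((φ 1 = φ d ∧ ϕ 1 = ϕ d) ↔
      ((∀ i j, 1 ≤ i → i ≤ d → 1 ≤ j → j ≤ d →
          (θs i - θs 0) * (θ i - θ 0)⁻¹ = (θs j - θs 0) * (θ j - θ 0)⁻¹) ∧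
       (∀ i j, 1 ≤ i → i ≤ d → 1 ≤ j → j ≤ d →
          (θs (d - i) - θs d) * (θ i - θ 0)⁻¹ = (θs (d - j) - θs d) * (θ j - θ 0)⁻¹))) ∧
    -- moreover: θ_i + θ_{d−i} and θ*_i + θ*_{d−i} are independent of i, and
    -- (i) is satisfied with ξ = −1, ξ* = −1, ζ, ζ* the respective common values
    ((φ 1 = φ d ∧ ϕ 1 = ϕ d) →
      ((∀ i ≤ d, θ i + θ (d - i) = θ 0 + θ d) ∧
       (∀ i ≤ d, θs i + θs (d - i) = θs 0 + θs d) ∧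
       (∀ i ≤ d, θ (d - i) = (-1 : K) * θ i + (θ 0 + θ d) ∧
                 θs (d - i) = (-1 : K) * θs i + (θs 0 + θs d)) ∧
       (∀ i, 1 ≤ i → i ≤ d →
         φ (d - i + 1) = (-1 : K) * (-1 : K) * φ i ∧
         ϕ (d - i + 1) = (-1 : K) * (-1 : K) * ϕ i))) := by
  obtain ⟨hPA1, hPA2, hPA3, hPA4, hPA5⟩ := hPA
  have hθ : ∀ i j, i ≤ d → j ≤ d → i ≠ j → θ i ≠ θ j :=
    fun i j hi hj hij => (hPA2 i j hi hj hij).1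
  have hθs : ∀ i j, i ≤ d → j ≤ d → i ≠ j → θs i ≠ θs j :=
    fun i j hi hj hij => (hPA2 i j hi hj hij).2
  have hc : θ 0 - θ d ≠ 0 := sub_ne_zero_of_ne (hθ 0 d (by omega) le_rfl (by omega))
  have hcs : θs 0 - θs d ≠ 0 := sub_ne_zero_of_ne (hθs 0 d (by omega) le_rfl (by omega))
  have hXd : θ d - θ 0 ≠ 0 := sub_ne_zero_of_ne (hθ d 0 le_rfl (by omega) (by omega))
  have hYd : θs d - θs 0 ≠ 0 := sub_ne_zero_of_ne (hθs d 0 le_rfl (by omega) (by omega))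
  -- symmetry of the partial sums of (θ h - θ (d-h))
  have hkey : ∀ a b : ℕ, a + b = d + 1 → a ≤ b →
      ∑ h ∈ Finset.range a, (θ h - θ (d - h)) = ∑ h ∈ Finset.range b, (θ h - θ (d - h)) := by
    intro a b hab hle
    have h0 : ∑ h ∈ Finset.Ico a b, (θ h - θ (d - h)) = 0 := by
      apply Finset.sum_involution (g := fun h _ => d - h)
      · intro x hx
        rw [Finset.mem_Ico] at hx
        rw [Nat.sub_sub_self (by omega : x ≤ d)]
        ring
      · intro x hx hfx hgx
        apply hfx
        rw [hgx, sub_self]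
      · intro x hx
        rw [Finset.mem_Ico] at hx ⊢
        omega
      · intro x hx
        rw [Finset.mem_Ico] at hx
        exact Nat.sub_sub_self (by omega)
    have h2 : ∑ h ∈ Finset.Ico 0 a, (θ h - θ (d - h)) + ∑ h ∈ Finset.Ico a b, (θ h - θ (d - h))
        = ∑ h ∈ Finset.Ico 0 b, (θ h - θ (d - h)) :=
      Finset.sum_Ico_consecutive _ (Nat.zero_le a) hle
    rw [Finset.range_eq_Ico, Finset.range_eq_Ico, ← h2, h0, add_zero]
  have hS1 : ∑ h ∈ Finset.range 1, (θ h - θ (d - h)) / (θ 0 - θ d) = 1 := by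
    rw [Finset.sum_range_one, Nat.sub_zero, div_self hc]
  have hSd : ∑ h ∈ Finset.range d, (θ h - θ (d - h)) / (θ 0 - θ d) = 1 := by
    rw [← Finset.sum_div, ← hkey 1 d (by omega) hd, Finset.sum_range_one, Nat.sub_zero,
      div_self hc]
  have hSsym : ∀ i, 1 ≤ i → i ≤ d →
      (∑ h ∈ Finset.range i, (θ h - θ (d - h)) / (θ 0 - θ d))
      = ∑ h ∈ Finset.range (d - i + 1), (θ h - θ (d - h)) / (θ 0 - θ d) := by
    intro i h1 h2
    rw [← Finset.sum_div, ← Finset.sum_div]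
    congr 1
    rcases le_total i (d - i + 1) with hle | hle
    · exact hkey i (d - i + 1) (by omega) hle
    · exact (hkey (d - i + 1) i (by omega) hle).symm
  have hP1 := hPA3 1 le_rfl hd
  rw [show (1 : ℕ) - 1 = 0 from rfl] at hP1
  have hPd := hPA3 d hd le_rfl
  have hQ1 := hPA4 1 le_rfl hd
  rw [show d - 1 + 1 = d from by omega] at hQ1
  have hQd := hPA4 d hd le_rfl
  rw [show d - d + 1 = 1 from by omega] at hQd
  -- the main work: (ii) implies the two symmetry statements
  have main : (φ 1 = φ d ∧ ϕ 1 = ϕ d) →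
      (∀ i ≤ d, θ i + θ (d - i) = θ 0 + θ d) ∧
      (∀ i ≤ d, (θs i - θs 0) * (θ d - θ 0) = (θs d - θs 0) * (θ i - θ 0)) := by
    rintro ⟨h2a, h2b⟩
    have hE1 : (θs 1 - θs 0) * (θ 0 - θ d) = (θs d - θs 0) * (θ (d - 1) - θ d) := by
      linear_combination (-1 : K) * hP1 + hPd + h2a - ϕ 1 * hS1 + ϕ 1 * hSd
    have hE2 : (θs 1 - θs 0) * (θ d - θ 0) = (θs d - θs 0) * (θ 1 - θ 0) := by
      linear_combination (-1 : K) * hQ1 + hQd + h2b - φ 1 * hS1 + φ 1 * hSd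
    have hΔ1d : θ 1 - θ 0 = θ d - θ (d - 1) := by
      have hz : (θs d - θs 0) * ((θ (d - 1) - θ d) + (θ 1 - θ 0)) = 0 := by
        linear_combination (-1 : K) * hE1 - hE2
      rcases mul_eq_zero.mp hz with h | h
      · exact absurd h hYd
      · linear_combination h
    rcases Nat.lt_or_ge d 3 with hlt | hge
    · interval_cases d
      · constructor
        · intro i hi
          interval_cases i
          · norm_num
          · norm_num
            ring
        · intro i hi
          interval_cases i
          · ring
          · ring
      · norm_num at hΔ1d
        constructor
        · intro i hi
          interval_cases i
          · norm_num
          · norm_num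
            linear_combination hΔ1d
          · norm_num
            ring
        · intro i hi
          interval_cases i
          · ring
          · exact hE2
          · ring
    · exact core_lemma d hge θ θs hθ hθs hPA5 hE2 hΔ1d
  -- (ii) → θ* symmetry
  have mains : (φ 1 = φ d ∧ ϕ 1 = ϕ d) → ∀ i ≤ d, θs i + θs (d - i) = θs 0 + θs d := by
    intro h2 i hi
    obtain ⟨hC1, hC2⟩ := main h2
    have hz : (θ d - θ 0) * (θs i + θs (d - i) - (θs 0 + θs d)) = 0 := by
      linear_combination hC2 i hi + hC2 (d - i) (by omega) + (θs d - θs 0) * hC1 i hi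
    rcases mul_eq_zero.mp hz with h | h
    · exact absurd h hXd
    · linear_combination h
  -- (ii) → (iii)
  have hiii : (φ 1 = φ d ∧ ϕ 1 = ϕ d) →
      ∀ i, 1 ≤ i → i ≤ d → φ i = φ (d - i + 1) ∧ ϕ i = ϕ (d - i + 1) := by
    intro h2 i h1i hid
    obtain ⟨hC1, hC2⟩ := main h2
    have hC2i := hC2 i hid
    have hC2j := hC2 (d - i + 1) (by omega)
    have hb : θ (d - i) - θ d = -(θ i - θ 0) := by linear_combination hC1 i hid
    have hxj : θ (d - i + 1) - θ 0 = -(θ (i - 1) - θ d) := by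
      have h := hC1 (i - 1) (by omega)
      rw [show d - (i - 1) = d - i + 1 from by omega] at h
      linear_combination h
    have hSsymi := hSsym i h1i hid
    constructor
    · have hPi := hPA3 i h1i hid
      have hPj := hPA3 (d - i + 1) (by omega) (by omega)
      rw [show d - i + 1 - 1 = d - i from by omega] at hPj
      have t1 : (θ d - θ 0) * ((θs i - θs 0) * (θ (i - 1) - θ d))
          = (θs d - θs 0) * (θ i - θ 0) * (θ (i - 1) - θ d) := by
        linear_combination (θ (i - 1) - θ d) * hC2i
      have t2 : (θ d - θ 0) * ((θs (d - i + 1) - θs 0) * (θ (d - i) - θ d))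
          = (θs d - θs 0) * (θ (d - i + 1) - θ 0) * (θ (d - i) - θ d) := by
        linear_combination (θ (d - i) - θ d) * hC2j
      have t3 : (θs d - θs 0) * (θ i - θ 0) * (θ (i - 1) - θ d)
          = (θs d - θs 0) * (θ (d - i + 1) - θ 0) * (θ (d - i) - θ d) := by
        rw [hxj, hb]; ring
      have hPP : (θs i - θs 0) * (θ (i - 1) - θ d)
          = (θs (d - i + 1) - θs 0) * (θ (d - i) - θ d) :=
        mul_left_cancel₀ hXd (by linear_combination t1 + t3 - t2)
      linear_combination hPi - hPj + ϕ 1 * hSsymi + hPP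
    · have hQi := hPA4 i h1i hid
      have hQj := hPA4 (d - i + 1) (by omega) (by omega)
      rw [show d - (d - i + 1) + 1 = i from by omega] at hQj
      have hQQ : (θs i - θs 0) * (θ (d - i + 1) - θ 0)
          = (θs (d - i + 1) - θs 0) * (θ i - θ 0) :=
        mul_left_cancel₀ hXd
          (by linear_combination (θ (d - i + 1) - θ 0) * hC2i - (θ i - θ 0) * hC2j)
      linear_combination hQi - hQj + φ 1 * hSsymi + hQQ
  -- (ii) → (iv)
  have hiv : (φ 1 = φ d ∧ ϕ 1 = ϕ d) →
      ((∀ i j, 1 ≤ i → i ≤ d → 1 ≤ j → j ≤ d →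
          (θs i - θs 0) * (θ i - θ 0)⁻¹ = (θs j - θs 0) * (θ j - θ 0)⁻¹) ∧
       (∀ i j, 1 ≤ i → i ≤ d → 1 ≤ j → j ≤ d →
          (θs (d - i) - θs d) * (θ i - θ 0)⁻¹ = (θs (d - j) - θs d) * (θ j - θ 0)⁻¹)) := by
    intro h2
    obtain ⟨hC1, hC2⟩ := main h2
    have hF1 : ∀ i j, 1 ≤ i → i ≤ d → 1 ≤ j → j ≤ d →
        (θs i - θs 0) * (θ i - θ 0)⁻¹ = (θs j - θs 0) * (θ j - θ 0)⁻¹ := by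
      intro i j h1i hid h1j hjd
      have hxi : θ i - θ 0 ≠ 0 := sub_ne_zero_of_ne (hθ i 0 hid (by omega) (by omega))
      have hxjj : θ j - θ 0 ≠ 0 := sub_ne_zero_of_ne (hθ j 0 hjd (by omega) (by omega))
      rw [← div_eq_mul_inv, ← div_eq_mul_inv, div_eq_div_iff hxi hxjj]
      exact mul_left_cancel₀ hXd
        (by linear_combination (θ j - θ 0) * hC2 i hid - (θ i - θ 0) * hC2 j hjd)
    refine ⟨hF1, ?_⟩
    intro i j h1i hid h1j hjd
    have hsi : θs (d - i) - θs d = -(θs i - θs 0) := by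
      linear_combination mains h2 i hid
    have hsj : θs (d - j) - θs d = -(θs j - θs 0) := by
      linear_combination mains h2 j hjd
    rw [hsi, hsj, neg_mul, neg_mul, neg_inj]
    exact hF1 i j h1i hid h1j hjd
  -- (iv) → (ii)
  have hii_of_iv :
      ((∀ i j, 1 ≤ i → i ≤ d → 1 ≤ j → j ≤ d →
          (θs i - θs 0) * (θ i - θ 0)⁻¹ = (θs j - θs 0) * (θ j - θ 0)⁻¹) ∧
       (∀ i j, 1 ≤ i → i ≤ d → 1 ≤ j → j ≤ d →
          (θs (d - i) - θs d) * (θ i - θ 0)⁻¹ = (θs (d - j) - θs d) * (θ j - θ 0)⁻¹)) →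
      (φ 1 = φ d ∧ ϕ 1 = ϕ d) := by
    rintro ⟨hiv1, hiv2⟩
    rcases Nat.lt_or_ge d 2 with hd1 | hd2
    · obtain rfl : d = 1 := by omega
      exact ⟨rfl, rfl⟩
    · have cross : ∀ a b c f : K, b ≠ 0 → f ≠ 0 → a * b⁻¹ = c * f⁻¹ → a * f = c * b := by
        intro a b c f hb hf h
        rw [← div_eq_mul_inv, ← div_eq_mul_inv, div_eq_div_iff hb hf] at h
        exact h
      have hx1 : θ 1 - θ 0 ≠ 0 := sub_ne_zero_of_ne (hθ 1 0 (by omega) (by omega) (by omega))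
      have hxd1 : θ (d - 1) - θ 0 ≠ 0 :=
        sub_ne_zero_of_ne (hθ (d - 1) 0 (by omega) (by omega) (by omega))
      have hR1 := cross _ _ _ _ hx1 hXd (hiv1 1 d (by omega) (by omega) (by omega) le_rfl)
      have hR2 := cross _ _ _ _ hxd1 hXd
        (hiv1 (d - 1) d (by omega) (by omega) (by omega) le_rfl)
      have h32 := hiv2 1 d (by omega) (by omega) (by omega) le_rfl
      rw [Nat.sub_self] at h32
      have hR3 := cross _ _ _ _ hx1 hXd h32
      have hxx : θ (d - 1) - θ 0 + (θ 1 - θ 0) = θ d - θ 0 := by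
        have hz : (θs d - θs 0) * ((θ (d - 1) - θ 0) + (θ 1 - θ 0) - (θ d - θ 0)) = 0 := by
          linear_combination hR3 - hR2
        rcases mul_eq_zero.mp hz with h | h
        · exact absurd h hYd
        · linear_combination h
      constructor
      · linear_combination hP1 - hPd + ϕ 1 * hS1 - ϕ 1 * hSd - hR1 - (θs d - θs 0) * hxx
      · linear_combination hQ1 - hQd + φ 1 * hS1 - φ 1 * hSd + hR1
  -- moreover
  have hmore : (φ 1 = φ d ∧ ϕ 1 = ϕ d) →
      ((∀ i ≤ d, θ i + θ (d - i) = θ 0 + θ d) ∧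
       (∀ i ≤ d, θs i + θs (d - i) = θs 0 + θs d) ∧
       (∀ i ≤ d, θ (d - i) = (-1 : K) * θ i + (θ 0 + θ d) ∧
                 θs (d - i) = (-1 : K) * θs i + (θs 0 + θs d)) ∧
       (∀ i, 1 ≤ i → i ≤ d →
         φ (d - i + 1) = (-1 : K) * (-1 : K) * φ i ∧
         ϕ (d - i + 1) = (-1 : K) * (-1 : K) * ϕ i)) := by
    intro h2
    obtain ⟨hC1, _⟩ := main h2
    have hC1s := mains h2
    refine ⟨hC1, hC1s, ?_, ?_⟩
    · intro i hi
      exact ⟨by linear_combination hC1 i hi, by linear_combination hC1s i hi⟩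
    · intro i h1i hid
      have h3 := hiii h2 i h1i hid
      exact ⟨by linear_combination (-1 : K) * h3.1, by linear_combination (-1 : K) * h3.2⟩
  -- (i) → (ii)
  have hii_of_i :
      (∃ ξ ζ ξs ζs : K, ξ ≠ 0 ∧ ξs ≠ 0 ∧
        (∀ i ≤ d, θ (d - i) = ξ * θ i + ζ ∧ θs (d - i) = ξs * θs i + ζs) ∧
        (∀ i, 1 ≤ i → i ≤ d →
          φ (d - i + 1) = ξ * ξs * φ i ∧ ϕ (d - i + 1) = ξ * ξs * ϕ i)) →
      (φ 1 = φ d ∧ ϕ 1 = ϕ d) := by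
    rintro ⟨ξ, ζ, ξs, ζs, hξ, hξs, haff, hmul⟩
    have h0 := (haff 0 (by omega)).1
    rw [Nat.sub_zero] at h0
    have hdd := (haff d le_rfl).1
    rw [Nat.sub_self] at hdd
    have h0s := (haff 0 (by omega)).2
    rw [Nat.sub_zero] at h0s
    have hdds := (haff d le_rfl).2
    rw [Nat.sub_self] at hdds
    have hξ1 : ξ = -1 := by
      have hz : (ξ + 1) * (θ 0 - θ d) = 0 := by linear_combination hdd - h0
      rcases mul_eq_zero.mp hz with h | h
      · linear_combination h
      · exact absurd h hc
    have hξs1 : ξs = -1 := by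
      have hz : (ξs + 1) * (θs 0 - θs d) = 0 := by linear_combination hdds - h0s
      rcases mul_eq_zero.mp hz with h | h
      · linear_combination h
      · exact absurd h hcs
    have hm := hmul 1 (by omega) hd
    rw [show d - 1 + 1 = d from by omega, hξ1, hξs1] at hm
    exact ⟨by linear_combination (-1 : K) * hm.1, by linear_combination (-1 : K) * hm.2⟩
  -- (ii) → (i)
  have hi_of_ii : (φ 1 = φ d ∧ ϕ 1 = ϕ d) →
      (∃ ξ ζ ξs ζs : K, ξ ≠ 0 ∧ ξs ≠ 0 ∧
        (∀ i ≤ d, θ (d - i) = ξ * θ i + ζ ∧ θs (d - i) = ξs * θs i + ζs) ∧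
        (∀ i, 1 ≤ i → i ≤ d →
          φ (d - i + 1) = ξ * ξs * φ i ∧ ϕ (d - i + 1) = ξ * ξs * ϕ i)) := by
    intro h2
    obtain ⟨_, _, hAff, hMul⟩ := hmore h2
    exact ⟨-1, θ 0 + θ d, -1, θs 0 + θs d, neg_ne_zero.mpr one_ne_zero,
      neg_ne_zero.mpr one_ne_zero, hAff, hMul⟩
  have hii_of_iii : (∀ i, 1 ≤ i → i ≤ d → φ i = φ (d - i + 1) ∧ ϕ i = ϕ (d - i + 1)) →
      (φ 1 = φ d ∧ ϕ 1 = ϕ d) := by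
    intro h3
    have h := h3 1 le_rfl hd
    rw [show d - 1 + 1 = d from by omega] at h
    exact h
  exact ⟨⟨hii_of_i, hi_of_ii⟩, ⟨fun h2 => hiii h2, hii_of_iii⟩, ⟨hiv, hii_of_iv⟩, hmore⟩
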